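/- Let H_β(s) = (s² + 0.2s + 0.8β)/(s³ + 1.2s² + 1.2s + 1). For β = 0.5, the denominator s³ + 1.2s² + 1.2s + 1 is Hurwitz (all roots have negative real part) and Re H_β(iω) > 0 for all ω ∈ ℝ. -/

import Mathlib

/-- For `H_β(s) = (s² + 0.2s + 0.8β)/(s³ + 1.2s² + 1.2s + 1)` with `β = 0.5`: the
denominator is Hurwitz and `Re H_β(iω) > 0` for all real `ω`. -/
theorem example3_fore_hbeta_spr
    (H : ℂ → ℂ)
    (hH : ∀ s : ℂ, H s =
      (s ^ 2 + 0.2 * s + 0.8 * (0.5 : ℂ)) / (s ^ 3 + 1.2 * s ^ 2 + 1.2 * s + 1)) :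
    (∀ z : ℂ, z ^ 3 + 1.2 * z ^ 2 + 1.2 * z + 1 = 0 → z.re < 0) ∧
    (∀ ω : ℝ, 0 < (H (Complex.I * (ω : ℂ))).re) := by
  constructor
  · intro z hz
    have hfac : (z + 1) * (z ^ 2 + 0.2 * z + 1) = 0 := by linear_combination hz
    rcases mul_eq_zero.mp hfac with h | h
    · have hz1 : z = -1 := eq_neg_of_add_eq_zero_left h
      simp [hz1]
    · have hre := congrArg Complex.re h
      have him := congrArg Complex.im h
      simp [pow_two, Complex.mul_re, Complex.mul_im, Complex.add_re, Complex.add_im] at hre him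
      norm_num at hre him
      have h2 : z.im ^ 2 * (2 * z.re + 0.2) = 0 := by linear_combination z.im * him
      nlinarith [hre, h2, sq_nonneg (z.re + 0.1), sq_nonneg z.im]
  · intro ω
    rw [hH, Complex.div_re, ← add_div]
    apply div_pos
    · simp only [Complex.add_re, Complex.add_im, Complex.mul_re, Complex.mul_im,
        Complex.I_re, Complex.I_im, Complex.ofReal_re, Complex.ofReal_im,
        pow_succ, pow_zero, one_mul, Complex.one_re, Complex.one_im]
      norm_num
      nlinarith [sq_nonneg (ω ^ 2 - 0.62), sq_nonneg ω]
    · have hpos : (0:ℝ) < ω ^ 6 - 0.96 * ω ^ 4 - 0.96 * ω ^ 2 + 1 := by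
        nlinarith [sq_nonneg (ω * (ω ^ 2 - 0.98)), sq_nonneg (ω ^ 2 - 0.98), sq_nonneg ω]
      have : Complex.normSq ((Complex.I * (ω:ℂ)) ^ 3 + 1.2 * (Complex.I * (ω:ℂ)) ^ 2
          + 1.2 * (Complex.I * (ω:ℂ)) + 1) = ω ^ 6 - 0.96 * ω ^ 4 - 0.96 * ω ^ 2 + 1 := by
        simp only [Complex.normSq_apply, Complex.add_re, Complex.add_im, Complex.mul_re,
          Complex.mul_im, Complex.I_re, Complex.I_im, Complex.ofReal_re, Complex.ofReal_im,
          pow_succ, pow_zero, one_mul, Complex.one_re, Complex.one_im]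
        norm_num
        ring
      rw [this]; exact hpos
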